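/- For every n ≥ 2, the automorphisms ε_{1,n}, ε_{2,n}, …, ε_{n-1,n} of the free group F_n pairwise commute and generate a free abelian subgroup of Aut(F_n) of rank n−1. -/

import Mathlib

/-- The basis-conjugating automorphism ε_{ij} of the free group:
`x_i ↦ x_j⁻¹ x_i x_j`, `x_l ↦ x_l` for `l ≠ i`. -/
def eps {n : ℕ} (i j : Fin n) : MulAut (FreeGroup (Fin n)) :=
  MonoidHom.toMulEquiv
    (FreeGroup.lift fun l =>
      if l = i then (FreeGroup.of j)⁻¹ * FreeGroup.of i * FreeGroup.of j else FreeGroup.of l)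
    (FreeGroup.lift fun l =>
      if l = i then FreeGroup.of j * FreeGroup.of i * (FreeGroup.of j)⁻¹ else FreeGroup.of l)
    (by ext l; by_cases h : l = i <;> by_cases h2 : j = i <;> simp [h, h2, mul_assoc])
    (by ext l; by_cases h : l = i <;> by_cases h2 : j = i <;> simp [h, h2, mul_assoc])

lemma eps_of {n : ℕ} (i j l : Fin n) :
    eps i j (FreeGroup.of l) =
      if l = i then (FreeGroup.of j)⁻¹ * FreeGroup.of i * FreeGroup.of j
      else FreeGroup.of l := by
  by_cases h : l = i <;> simp [eps, h]

lemma eps_of_self {n : ℕ} (i j : Fin n) :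
    eps i j (FreeGroup.of i) = (FreeGroup.of j)⁻¹ * FreeGroup.of i * FreeGroup.of j := by
  simp [eps_of]

lemma eps_of_other {n : ℕ} (i j l : Fin n) (h : l ≠ i) :
    eps i j (FreeGroup.of l) = FreeGroup.of l := by
  simp [eps_of, h]

lemma eps_inv_of_self {n : ℕ} (i j : Fin n) :
    (eps i j)⁻¹ (FreeGroup.of i) = FreeGroup.of j * FreeGroup.of i * (FreeGroup.of j)⁻¹ := by
  simp [eps, MulAut.inv_def, MonoidHom.toMulEquiv]

lemma mulAut_zpow_fix {G : Type*} [Group G] (f : MulAut G) (x : G) (h : f x = x) (k : ℤ) :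
    (f ^ k) x = x := by
  have h' : f⁻¹ x = x := by
    rw [MulAut.inv_def]
    exact (MulEquiv.symm_apply_eq f).2 h.symm
  induction k using Int.induction_on with
  | zero => simp
  | succ k ih => rw [zpow_add_one, MulAut.mul_apply, h, ih]
  | pred k ih =>
      rw [zpow_sub_one, MulAut.mul_apply, h', ih]

lemma castSucc_ne_last {n : ℕ} (a : Fin (n + 1)) : a.castSucc ≠ Fin.last (n + 1) :=
  (Fin.castSucc_lt_last a).ne

lemma eps_zpow_last {n : ℕ} (a : Fin (n + 1)) (k : ℤ) :
    ((eps a.castSucc (Fin.last (n + 1))) ^ k) (FreeGroup.of (Fin.last (n + 1))) =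
      FreeGroup.of (Fin.last (n + 1)) :=
  mulAut_zpow_fix _ _ (eps_of_other _ _ _ (Ne.symm (castSucc_ne_last a))) k

lemma eps_zpow_other {n : ℕ} (a b : Fin (n + 1)) (h : b ≠ a) (k : ℤ) :
    ((eps a.castSucc (Fin.last (n + 1))) ^ k) (FreeGroup.of b.castSucc) =
      FreeGroup.of b.castSucc :=
  mulAut_zpow_fix _ _ (eps_of_other _ _ _ (fun hc => h (Fin.castSucc_injective _ hc))) k

lemma eps_zpow_self {n : ℕ} (a : Fin (n + 1)) (k : ℤ) :
    ((eps a.castSucc (Fin.last (n + 1))) ^ k) (FreeGroup.of a.castSucc) =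
      (FreeGroup.of (Fin.last (n + 1))) ^ (-k) * FreeGroup.of a.castSucc *
        (FreeGroup.of (Fin.last (n + 1))) ^ k := by
  induction k using Int.induction_on with
  | zero => simp
  | succ k ih =>
      rw [zpow_add_one, MulAut.mul_apply, eps_of_self, map_mul, map_mul, map_inv,
        eps_zpow_last, ih]
      group
  | pred k ih =>
      rw [zpow_sub_one, MulAut.mul_apply, eps_inv_of_self, map_mul, map_mul, map_inv,
        eps_zpow_last, ih]
      group

lemma eps_commute {n : ℕ} (a b : Fin (n + 1)) :
    Commute (eps a.castSucc (Fin.last (n + 1))) (eps b.castSucc (Fin.last (n + 1))) := by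
  rcases eq_or_ne a b with rfl | hab
  · exact Commute.refl _
  have h1 : a.castSucc ≠ b.castSucc := fun hc => hab (Fin.castSucc_injective _ hc)
  have hcomp :
      ((eps a.castSucc (Fin.last (n + 1))).toMonoidHom.comp
        (eps b.castSucc (Fin.last (n + 1))).toMonoidHom) =
      ((eps b.castSucc (Fin.last (n + 1))).toMonoidHom.comp
        (eps a.castSucc (Fin.last (n + 1))).toMonoidHom) := by
    apply FreeGroup.ext_hom
    intro l
    simp only [MonoidHom.comp_apply, MulEquiv.coe_toMonoidHom]
    by_cases hl : l = a.castSucc <;> by_cases hl' : l = b.castSucc <;>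
      simp [eps_of, hl, hl', h1, h1.symm, (castSucc_ne_last a).symm, (castSucc_ne_last b).symm,
        map_mul, map_inv]
  exact MulEquiv.ext fun x => DFunLike.congr_fun hcomp x

lemma prod_map_apply {n : ℕ} (m : Fin (n + 1) → ℤ) (L : List (Fin (n + 1)))
    (hnd : L.Nodup) (b : Fin (n + 1)) :
    ((L.map fun a => (eps a.castSucc (Fin.last (n + 1))) ^ (m a)).prod)
        (FreeGroup.of b.castSucc) =
      if b ∈ L then
        (FreeGroup.of (Fin.last (n + 1))) ^ (-(m b)) * FreeGroup.of b.castSucc *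
          (FreeGroup.of (Fin.last (n + 1))) ^ (m b)
      else FreeGroup.of b.castSucc := by
  induction L with
  | nil => simp
  | cons a L ih =>
      have hnd' : L.Nodup := (List.nodup_cons.mp hnd).2
      have ha : a ∉ L := (List.nodup_cons.mp hnd).1
      rw [List.map_cons, List.prod_cons, MulAut.mul_apply, ih hnd']
      rcases eq_or_ne b a with rfl | hba
      · rw [if_neg ha, eps_zpow_self, if_pos (List.mem_cons_self (a := b) (l := L))]
      · by_cases hbL : b ∈ L
        · rw [if_pos hbL, if_pos (List.mem_cons_of_mem a hbL),
            map_mul, map_mul, map_zpow, map_zpow, eps_zpow_last, eps_zpow_other a b hba]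
        · rw [if_neg hbL, if_neg (by simp [hba, hbL]), eps_zpow_other a b hba]

lemma detect {n : ℕ} (b : Fin (n + 1)) (k : ℤ)
    (h : (FreeGroup.of (Fin.last (n + 1))) ^ (-k) * FreeGroup.of b.castSucc *
        (FreeGroup.of (Fin.last (n + 1))) ^ k = FreeGroup.of b.castSucc) :
    k = 0 := by
  set φ : FreeGroup (Fin (n + 2)) →* Equiv.Perm ℤ :=
    FreeGroup.lift (fun l =>
      if l = Fin.last (n + 1) then Equiv.addRight (1 : ℤ)
      else if l = b.castSucc then Equiv.swap 0 1 else 1) with hφ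
  have h1 : φ (FreeGroup.of (Fin.last (n + 1))) = Equiv.addRight (1 : ℤ) := by
    simp [hφ]
  have h2 : φ (FreeGroup.of b.castSucc) = Equiv.swap 0 1 := by
    simp [hφ, castSucc_ne_last b]
  have key := congrArg φ h
  rw [map_mul, map_mul, map_zpow, map_zpow, h1, h2, Equiv.zsmul_addRight,
    Equiv.zsmul_addRight] at key
  have heval := congrArg (fun (σ : Equiv.Perm ℤ) => σ 0) key
  simp only [Equiv.Perm.mul_apply, Equiv.coe_addRight, smul_eq_mul, mul_one, zero_add,
    Equiv.swap_apply_left] at heval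
  have hswap : Equiv.swap (0 : ℤ) 1 k = k + 1 := by linarith
  by_cases h0 : k = 0
  · exact h0
  by_cases h1' : k = 1
  · rw [h1', Equiv.swap_apply_right] at hswap
    norm_num at hswap
  · rw [Equiv.swap_apply_of_ne_of_ne h0 h1'] at hswap
    omega

/-- For every `n ≥ 2` (here `n + 2`), the automorphisms
`ε_{1,n}, ε_{2,n}, …, ε_{n-1,n}` (0-based: `eps k.castSucc (Fin.last (n+1))`)
pairwise commute and generate a free abelian group of rank `n - 1`: they are
`ℤ`-linearly independent, i.e. any product with integer exponents equals the identity
only when all exponents vanish. -/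
theorem eps_to_last_free_abelian (n : ℕ) :
    (∀ a b : Fin (n + 1),
      Commute (eps a.castSucc (Fin.last (n + 1))) (eps b.castSucc (Fin.last (n + 1)))) ∧
    ∀ m : Fin (n + 1) → ℤ,
      (List.ofFn fun a : Fin (n + 1) =>
        (eps a.castSucc (Fin.last (n + 1))) ^ (m a)).prod = 1 → m = 0 := by
  refine ⟨eps_commute, fun m hm => ?_⟩
  funext b
  rw [List.ofFn_eq_map] at hm
  have key := prod_map_apply m (List.finRange (n + 1)) (List.nodup_finRange _) b
  rw [hm, if_pos (List.mem_finRange b)] at key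
  exact detect b (m b) (Eq.symm key)
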